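/- (Nuclear-norm bound via duality.) Let Y ∈ ℝ^{rn×p} be feasible (Y_i Y_iᵀ = I_r for all i) and let Z ∈ ℝ^{rn×r} be the stack of n copies of I_r. Set R = (1/n) Σ_{i=1}^n Y_i, W_i = Y_i − R, and let W ∈ ℝ^{rn×p} be the stack of the blocks W_i. Then for every M ∈ ℝ^{rn×rn} with ℓ₂→ℓ₂ operator norm ‖M‖ ≤ 1, one has tr(M (Y Yᵀ − Z Zᵀ)ᵀ) ≤ 2 √(rn) ‖W‖_F (equivalently, the nuclear norm of Y Yᵀ − Z Zᵀ is at most 2√(rn)‖W‖_F). -/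

import Mathlib

open Matrix MeasureTheory ProbabilityTheory
open scoped Kronecker BigOperators

namespace SyncPaper

variable {α : Type*}

/-- The `i`-th `r × p` row-block of a block matrix `Y ∈ α^{rn × p}`. -/
def blk {n r p : ℕ} (Y : Matrix (Fin n × Fin r) (Fin p) α) (i : Fin n) :
    Matrix (Fin r) (Fin p) α :=
  Matrix.of fun a b => Y (i, a) b

/-- `Y` is feasible: every `r × p` row-block has orthonormal rows. -/
def Feasible {n r p : ℕ} (Y : Matrix (Fin n × Fin r) (Fin p) ℝ) : Prop :=
  ∀ i, blk Y i * (blk Y i)ᵀ = 1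

/-- Symmetric block-diagonal projection: keeps the symmetric part of each `r × r`
diagonal block and zeroes out all off-diagonal blocks. -/
noncomputable def SBD {n r : ℕ} (M : Matrix (Fin n × Fin r) (Fin n × Fin r) ℝ) :
    Matrix (Fin n × Fin r) (Fin n × Fin r) ℝ :=
  Matrix.of fun q q' => if q.1 = q'.1 then (M q q' + M q' q) / 2 else 0

/-- The matrix `S(Y) = L̂ − SBD(L̂ Y Yᵀ)`. -/
noncomputable def Smat {n r p : ℕ} (Lhat : Matrix (Fin n × Fin r) (Fin n × Fin r) ℝ)
    (Y : Matrix (Fin n × Fin r) (Fin p) ℝ) :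
    Matrix (Fin n × Fin r) (Fin n × Fin r) ℝ :=
  Lhat - SBD (Lhat * Y * Yᵀ)

/-- Second-order critical point of the rank-`p` problem `min ⟨L̂, Y Yᵀ⟩` over feasible `Y`. -/
def IsSecondOrderCritical {n r p : ℕ} (Lhat : Matrix (Fin n × Fin r) (Fin n × Fin r) ℝ)
    (Y : Matrix (Fin n × Fin r) (Fin p) ℝ) : Prop :=
  Feasible Y ∧ Smat Lhat Y * Y = 0 ∧
    ∀ Ydot : Matrix (Fin n × Fin r) (Fin p) ℝ,
      (∀ i, blk Ydot i * (blk Y i)ᵀ + blk Y i * (blk Ydot i)ᵀ = 0) →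
      0 ≤ (Smat Lhat Y * Ydot * Ydotᵀ).trace

/-- The stacked ground truth `Z ∈ ℝ^{rn × r}`. -/
def Zstack {n r : ℕ} (Zb : Fin n → Matrix (Fin r) (Fin r) ℝ) :
    Matrix (Fin n × Fin r) (Fin r) ℝ :=
  Matrix.of fun q b => Zb q.1 q.2 b

/-- The block-diagonal matrix `D` with diagonal blocks `Z_1, …, Z_n`. -/
def Dmat {n r : ℕ} (Zb : Fin n → Matrix (Fin r) (Fin r) ℝ) :
    Matrix (Fin n × Fin r) (Fin n × Fin r) ℝ :=
  Matrix.of fun q q' => if q.1 = q'.1 then Zb q.1 q.2 q'.2 else 0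

/-- `L_Z = D (L ⊗ I_r) Dᵀ`. -/
def LZmat {n r : ℕ} (L : Matrix (Fin n) (Fin n) ℝ) (Zb : Fin n → Matrix (Fin r) (Fin r) ℝ) :
    Matrix (Fin n × Fin r) (Fin n × Fin r) ℝ :=
  Dmat Zb * (L ⊗ₖ (1 : Matrix (Fin r) (Fin r) ℝ)) * (Dmat Zb)ᵀ

/-- The ℓ₂→ℓ₂ operator norm of a matrix. -/
noncomputable def opNorm {m m' : Type*} [Fintype m] [Fintype m'] [DecidableEq m']
    (M : Matrix m m' ℝ) : ℝ :=
  ‖(Matrix.toEuclideanLin (𝕜 := ℝ) (m := m) (n := m')).trans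
      LinearMap.toContinuousLinearMap M‖

/-- The second-smallest eigenvalue of a connected graph Laplacian, via the variational
(Courant–Fischer) characterization: the minimum of the quadratic form over unit vectors
orthogonal to the all-ones vector. -/
noncomputable def lam2 {n : ℕ} (L : Matrix (Fin n) (Fin n) ℝ) : ℝ :=
  sInf {t : ℝ | ∃ x : Fin n → ℝ, (∑ i, x i = 0) ∧ (∑ i, (x i) ^ 2 = 1) ∧ t = x ⬝ᵥ (L *ᵥ x)}

/-- Squared Frobenius norm of a real matrix. -/
def frobSq {m m' : Type*} [Fintype m] [Fintype m'] (M : Matrix m m' ℝ) : ℝ :=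
  ∑ i, ∑ j, (M i j) ^ 2

/-- The inner product `⟨A, B⟩ = tr(A Bᵀ)`. -/
def ip {m : Type*} [Fintype m] (A B : Matrix m m ℝ) : ℝ := (A * Bᵀ).trace

/-- Feasibility for the SDP relaxation. -/
def SDPFeasible {n r : ℕ} (X : Matrix (Fin n × Fin r) (Fin n × Fin r) ℝ) : Prop :=
  X.PosSemidef ∧ SBD X = 1

end SyncPaper

namespace SyncPaper


/-! ### Auxiliary lemmas -/

lemma aux_sum_mul_le_sqrt {ι : Type*} [Fintype ι] (f g : ι → ℝ) :
    ∑ i, f i * g i ≤ Real.sqrt (∑ i, f i ^ 2) * Real.sqrt (∑ i, g i ^ 2) := by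
  have h2 : (∑ i, f i * g i) ^ 2 ≤ (∑ i, f i ^ 2) * ∑ i, g i ^ 2 :=
    Finset.sum_mul_sq_le_sq_mul_sq _ _ _
  calc ∑ i, f i * g i ≤ |∑ i, f i * g i| := le_abs_self _
    _ = Real.sqrt ((∑ i, f i * g i) ^ 2) := (Real.sqrt_sq_eq_abs _).symm
    _ ≤ Real.sqrt ((∑ i, f i ^ 2) * ∑ i, g i ^ 2) := Real.sqrt_le_sqrt h2
    _ = _ := Real.sqrt_mul (by positivity) _

lemma aux_bessel {r p : ℕ} (A : Matrix (Fin r) (Fin p) ℝ) (hA : A * Aᵀ = 1) (v : Fin p → ℝ) :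
    (A *ᵥ v) ⬝ᵥ (A *ᵥ v) ≤ v ⬝ᵥ v := by
  set u := A *ᵥ v with hu
  have e1 : (Aᵀ *ᵥ u) ⬝ᵥ v = u ⬝ᵥ u := by
    rw [Matrix.mulVec_transpose]
    exact (Matrix.dotProduct_mulVec u A v).symm
  have e2 : (Aᵀ *ᵥ u) ⬝ᵥ (Aᵀ *ᵥ u) = u ⬝ᵥ u := by
    rw [Matrix.dotProduct_mulVec, Matrix.vecMul_transpose, Matrix.mulVec_mulVec, hA,
      Matrix.one_mulVec]
  have h0 : 0 ≤ (v - Aᵀ *ᵥ u) ⬝ᵥ (v - Aᵀ *ᵥ u) := Finset.sum_nonneg fun c _ => mul_self_nonneg _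
  have e1' : v ⬝ᵥ (Aᵀ *ᵥ u) = u ⬝ᵥ u := by rw [dotProduct_comm]; exact e1
  have expand : (v - Aᵀ *ᵥ u) ⬝ᵥ (v - Aᵀ *ᵥ u) = v ⬝ᵥ v - u ⬝ᵥ u := by
    rw [sub_dotProduct, dotProduct_sub, dotProduct_sub, e2, e1', e1]
    ring
  linarith [h0, expand.symm.le]

lemma aux_dot_mulVec_le {m : Type*} [Fintype m] [DecidableEq m] (M : Matrix m m ℝ)
    (u v : m → ℝ) :
    u ⬝ᵥ (M *ᵥ v) ≤ opNorm M * Real.sqrt (∑ i, u i ^ 2) * Real.sqrt (∑ i, v i ^ 2) := by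
  set f := (Matrix.toEuclideanLin (𝕜 := ℝ) (m := m) (n := m)).trans
      LinearMap.toContinuousLinearMap M with hf
  set u' : EuclideanSpace ℝ m := (WithLp.equiv 2 (m → ℝ)).symm u
  set v' : EuclideanSpace ℝ m := (WithLp.equiv 2 (m → ℝ)).symm v
  have hu : ‖u'‖ = Real.sqrt (∑ i, u i ^ 2) := by
    rw [EuclideanSpace.norm_eq]
    congr 1
    refine Finset.sum_congr rfl fun i _ => ?_
    simp [u', Real.norm_eq_abs, sq_abs]
  have hv : ‖v'‖ = Real.sqrt (∑ i, v i ^ 2) := by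
    rw [EuclideanSpace.norm_eq]
    congr 1
    refine Finset.sum_congr rfl fun i _ => ?_
    simp [v', Real.norm_eq_abs, sq_abs]
  have h1 : u ⬝ᵥ (M *ᵥ v) = inner ℝ u' (f v') := by
    simp [f, u', v', LinearEquiv.trans_apply, Matrix.toEuclideanLin_apply_piLp_toLp,
      PiLp.inner_apply, dotProduct, RCLike.inner_apply, Matrix.mulVec, mul_comm]
  rw [h1]
  calc inner ℝ u' (f v') ≤ ‖u'‖ * ‖f v'‖ := real_inner_le_norm _ _
    _ ≤ ‖u'‖ * (‖f‖ * ‖v'‖) := mul_le_mul_of_nonneg_left (f.le_opNorm v') (norm_nonneg _)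
    _ = ‖f‖ * Real.sqrt (∑ i, u i ^ 2) * Real.sqrt (∑ i, v i ^ 2) := by rw [hu, hv]; ring

lemma aux_trace_bound {m k : Type*} [Fintype m] [Fintype k] [DecidableEq m]
    (M : Matrix m m ℝ) (B : Matrix m k ℝ) (C : Matrix k m ℝ) :
    (M * B * C).trace ≤ opNorm M * Real.sqrt (frobSq B) * Real.sqrt (frobSq C) := by
  have htr : (M * B * C).trace = ∑ j, ∑ q, C j q * (M * B) q j := by
    rw [Matrix.trace]
    simp only [Matrix.diag_apply, Matrix.mul_apply]
    rw [Finset.sum_comm]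
    exact Finset.sum_congr rfl fun j _ => Finset.sum_congr rfl fun q _ => by ring
  have key : ∀ j : k, ∑ q, C j q * (M * B) q j ≤
      opNorm M * Real.sqrt (∑ q, C j q ^ 2) * Real.sqrt (∑ q, B q j ^ 2) := by
    intro j
    have h := aux_dot_mulVec_le M (fun q => C j q) (fun q' => B q' j)
    have e : (fun q => C j q) ⬝ᵥ (M *ᵥ fun q' => B q' j) = ∑ q, C j q * (M * B) q j := by
      simp [dotProduct, Matrix.mulVec, Matrix.mul_apply]
    rw [e] at h
    exact h
  have hops : 0 ≤ opNorm M := norm_nonneg _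
  calc (M * B * C).trace = ∑ j, ∑ q, C j q * (M * B) q j := htr
    _ ≤ ∑ j, opNorm M * Real.sqrt (∑ q, C j q ^ 2) * Real.sqrt (∑ q, B q j ^ 2) :=
        Finset.sum_le_sum fun j _ => key j
    _ = opNorm M * ∑ j, Real.sqrt (∑ q, C j q ^ 2) * Real.sqrt (∑ q, B q j ^ 2) := by
        rw [Finset.mul_sum]
        exact Finset.sum_congr rfl fun j _ => by ring
    _ ≤ opNorm M * (Real.sqrt (∑ j, ∑ q, C j q ^ 2) * Real.sqrt (∑ j, ∑ q, B q j ^ 2)) := by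
        refine mul_le_mul_of_nonneg_left ?_ hops
        have h := aux_sum_mul_le_sqrt (fun j : k => Real.sqrt (∑ q, C j q ^ 2))
          (fun j : k => Real.sqrt (∑ q, B q j ^ 2))
        have e1 : ∑ j, Real.sqrt (∑ q, C j q ^ 2) ^ 2 = ∑ j, ∑ q, C j q ^ 2 :=
          Finset.sum_congr rfl fun j _ => Real.sq_sqrt (by positivity)
        have e2 : ∑ j, Real.sqrt (∑ q, B q j ^ 2) ^ 2 = ∑ j, ∑ q, B q j ^ 2 :=
          Finset.sum_congr rfl fun j _ => Real.sq_sqrt (by positivity)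
        rw [e1, e2] at h
        exact h
    _ = opNorm M * Real.sqrt (frobSq B) * Real.sqrt (frobSq C) := by
        have hB : frobSq B = ∑ j, ∑ q, B q j ^ 2 := Finset.sum_comm
        have hC : frobSq C = ∑ j, ∑ q, C j q ^ 2 := rfl
        rw [hB, hC]
        ring

/-- **Nuclear-norm bound via duality.**  Let `Y` be feasible, `Z` the stack of `n` copies of
`I_r`, `R = (1/n) Σ_i Y_i`, `W_i = Y_i − R`, and `W` the stack of the `W_i`.  Then for every
`M` with ℓ₂→ℓ₂ operator norm at most `1`,
`tr(M (Y Yᵀ − Z Zᵀ)ᵀ) ≤ 2 √(rn) ‖W‖_F`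
(equivalently, `‖Y Yᵀ − Z Zᵀ‖_* ≤ 2 √(rn) ‖W‖_F`). -/
theorem nuclear_norm_bound
    (n r p : ℕ) (hn : 1 ≤ n) (hr : 1 ≤ r) (hrp : r ≤ p)
    (Y : Matrix (Fin n × Fin r) (Fin p) ℝ) (hY : Feasible Y)
    (Z : Matrix (Fin n × Fin r) (Fin r) ℝ)
    (hZ : Z = Matrix.of fun (q : Fin n × Fin r) (b : Fin r) => if q.2 = b then (1 : ℝ) else 0)
    (R : Matrix (Fin r) (Fin p) ℝ) (hR : R = ((n : ℝ)⁻¹) • ∑ i, blk Y i)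
    (W : Matrix (Fin n × Fin r) (Fin p) ℝ) (hW : ∀ i, blk W i = blk Y i - R)
    (M : Matrix (Fin n × Fin r) (Fin n × Fin r) ℝ) (hM : opNorm M ≤ 1) :
    (M * (Y * Yᵀ - Z * Zᵀ)ᵀ).trace ≤ 2 * Real.sqrt (r * n) * Real.sqrt (frobSq W) := by
  -- entrywise facts
  have hblkY : ∀ (i : Fin n) (a b : Fin r), ∑ c, Y (i, a) c * Y (i, b) c
      = if a = b then (1:ℝ) else 0 := by
    intro i a b
    have h := congrFun (congrFun (hY i) a) b
    simpa [blk, Matrix.mul_apply, Matrix.transpose_apply, Matrix.one_apply] using h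
  have hWe : ∀ (i : Fin n) (a : Fin r) (c : Fin p), W (i, a) c = Y (i, a) c - R a c := by
    intro i a c
    have h := congrFun (congrFun (hW i) a) c
    simpa [blk, Matrix.sub_apply] using h
  -- W = Y - Z * R
  have hZW : W = Y - Z * R := by
    ext q c
    obtain ⟨i, a⟩ := q
    have hz : (Z * R) (i, a) c = R a c := by
      simp [hZ, Matrix.mul_apply]
    rw [Matrix.sub_apply, hz]
    exact hWe i a c
  set N : Matrix (Fin r) (Fin n × Fin r) ℝ := R * Yᵀ - Zᵀ with hN
  -- the key algebraic identity
  have hid : (Y * Yᵀ - Z * Zᵀ)ᵀ = W * Yᵀ + Z * N := by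
    rw [Matrix.transpose_sub, Matrix.transpose_mul, Matrix.transpose_mul,
      Matrix.transpose_transpose, Matrix.transpose_transpose, hZW, hN,
      Matrix.sub_mul, Matrix.mul_sub, ← Matrix.mul_assoc]
    abel
  -- Frobenius norms of Y and Z
  have hfY : frobSq Y = (r : ℝ) * n := by
    rw [frobSq, Fintype.sum_prod_type]
    have h1 : ∀ (i : Fin n) (a : Fin r), ∑ b, Y (i, a) b ^ 2 = (1:ℝ) := by
      intro i a
      have h := hblkY i a a
      simp only [if_true, eq_self_iff_true] at h
      rw [← h]
      exact Finset.sum_congr rfl fun c _ => sq (Y (i, a) c)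
    calc ∑ i : Fin n, ∑ a : Fin r, ∑ b, Y (i, a) b ^ 2
        = ∑ _i : Fin n, ∑ _a : Fin r, (1:ℝ) :=
          Finset.sum_congr rfl fun i _ => Finset.sum_congr rfl fun a _ => h1 i a
      _ = (r : ℝ) * n := by simp [mul_comm]
  have hfZ : frobSq Z = (r : ℝ) * n := by
    rw [frobSq, Fintype.sum_prod_type]
    have h1 : ∀ (i : Fin n) (a : Fin r), ∑ b, Z (i, a) b ^ 2 = (1:ℝ) := by
      intro i a
      simp [hZ, sq, ite_and]
    calc ∑ i : Fin n, ∑ a : Fin r, ∑ b, Z (i, a) b ^ 2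
        = ∑ _i : Fin n, ∑ _a : Fin r, (1:ℝ) :=
          Finset.sum_congr rfl fun i _ => Finset.sum_congr rfl fun a _ => h1 i a
      _ = (r : ℝ) * n := by simp [mul_comm]
  have hfYt : frobSq Yᵀ = frobSq Y := by
    rw [frobSq, frobSq]
    exact Finset.sum_comm
  -- entries of N
  have hNentry : ∀ (a : Fin r) (i : Fin n) (b : Fin r),
      N a (i, b) = -((blk Y i *ᵥ fun c => W (i, a) c) b) := by
    intro a i b
    have horth := hblkY i b a
    simp only [hN, Matrix.sub_apply, Matrix.mul_apply, Matrix.transpose_apply, hZ,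
      Matrix.of_apply, Matrix.mulVec, dotProduct, blk]
    have hba : (if b = a then (1:ℝ) else 0) = ∑ c, Y (i, b) c * Y (i, a) c := (hblkY i b a).symm
    rw [hba]
    simp only [hWe, mul_sub]
    rw [Finset.sum_sub_distrib, neg_sub]
    have hc : ∑ c : Fin p, R a c * Y (i, b) c = ∑ c : Fin p, Y (i, b) c * R a c :=
      Finset.sum_congr rfl fun c _ => mul_comm _ _
    rw [hc]
  -- frobSq N ≤ frobSq W
  have hfN : frobSq N ≤ frobSq W := by
    rw [frobSq, frobSq]
    calc ∑ a : Fin r, ∑ q : Fin n × Fin r, N a q ^ 2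
        = ∑ i : Fin n, ∑ a : Fin r, ∑ b : Fin r, N a (i, b) ^ 2 := by
          simp_rw [Fintype.sum_prod_type]
          exact Finset.sum_comm
      _ ≤ ∑ i : Fin n, ∑ a : Fin r, ∑ c : Fin p, W (i, a) c ^ 2 := by
          refine Finset.sum_le_sum fun i _ => Finset.sum_le_sum fun a _ => ?_
          have hb := aux_bessel (blk Y i) (hY i) (fun c => W (i, a) c)
          have e1 : ∑ b : Fin r, N a (i, b) ^ 2
              = (blk Y i *ᵥ fun c => W (i, a) c) ⬝ᵥ (blk Y i *ᵥ fun c => W (i, a) c) := by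
            rw [dotProduct]
            refine Finset.sum_congr rfl fun b _ => ?_
            rw [hNentry a i b]; ring
          have e2 : ∑ c : Fin p, W (i, a) c ^ 2
              = (fun c => W (i, a) c) ⬝ᵥ (fun c => W (i, a) c) := by
            rw [dotProduct]
            exact Finset.sum_congr rfl fun c _ => sq (W (i, a) c)
          rw [e1, e2]
          exact hb
      _ = ∑ q : Fin n × Fin r, ∑ c, W q c ^ 2 := by rw [Fintype.sum_prod_type]
  -- assemble
  have hsplit : (M * (Y * Yᵀ - Z * Zᵀ)ᵀ).trace
      = (M * (W * Yᵀ)).trace + (M * (Z * N)).trace := by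
    rw [hid, Matrix.mul_add, Matrix.trace_add]
  have hWnn : (0:ℝ) ≤ Real.sqrt (frobSq W) := Real.sqrt_nonneg _
  have hrn : (0:ℝ) ≤ Real.sqrt ((r:ℝ) * n) := Real.sqrt_nonneg _
  have h1 : (M * (W * Yᵀ)).trace ≤ Real.sqrt (frobSq W) * Real.sqrt ((r:ℝ) * n) := by
    calc (M * (W * Yᵀ)).trace = (M * W * Yᵀ).trace := by rw [Matrix.mul_assoc]
      _ ≤ opNorm M * Real.sqrt (frobSq W) * Real.sqrt (frobSq Yᵀ) := aux_trace_bound M W Yᵀ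
      _ = opNorm M * (Real.sqrt (frobSq W) * Real.sqrt ((r:ℝ) * n)) := by
          rw [hfYt, hfY]; ring
      _ ≤ 1 * (Real.sqrt (frobSq W) * Real.sqrt ((r:ℝ) * n)) :=
          mul_le_mul_of_nonneg_right hM (by positivity)
      _ = Real.sqrt (frobSq W) * Real.sqrt ((r:ℝ) * n) := one_mul _
  have h2 : (M * (Z * N)).trace ≤ Real.sqrt ((r:ℝ) * n) * Real.sqrt (frobSq W) := by
    calc (M * (Z * N)).trace = (M * Z * N).trace := by rw [Matrix.mul_assoc]
      _ ≤ opNorm M * Real.sqrt (frobSq Z) * Real.sqrt (frobSq N) := aux_trace_bound M Z N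
      _ ≤ opNorm M * Real.sqrt (frobSq Z) * Real.sqrt (frobSq W) := by
          refine mul_le_mul_of_nonneg_left (Real.sqrt_le_sqrt hfN) ?_
          exact mul_nonneg (norm_nonneg _) (Real.sqrt_nonneg _)
      _ = opNorm M * (Real.sqrt ((r:ℝ) * n) * Real.sqrt (frobSq W)) := by rw [hfZ]; ring
      _ ≤ 1 * (Real.sqrt ((r:ℝ) * n) * Real.sqrt (frobSq W)) :=
          mul_le_mul_of_nonneg_right hM (by positivity)
      _ = Real.sqrt ((r:ℝ) * n) * Real.sqrt (frobSq W) := one_mul _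
  have hgoal : (M * (Y * Yᵀ - Z * Zᵀ)ᵀ).trace
      ≤ 2 * Real.sqrt ((r:ℝ) * n) * Real.sqrt (frobSq W) := by
    rw [hsplit]
    linarith [h1, h2]
  exact hgoal

end SyncPaper
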